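/- Let n ≥ 2 and let σ be the cyclic shift of pitch-class segments, (σ x) r = x (r + 1) with addition in Fin n. For every natural number k, σ^k ∘ p k (k+1) = p 0 1 ∘ σ^k as maps on Fin n → ZMod 12, where the indices k and k+1 are taken in Fin n (cyclically). -/

import Mathlib

/-- Contextual inversion `p i j` on pitch-class segments of length `n`. -/
def p {n : ℕ} (i j : Fin n) (x : Fin n → ZMod 12) : Fin n → ZMod 12 :=
  fun r => x i + x j - x r

/-- The cyclic shift `σ` on pitch-class segments of length `n`. -/
def cshift {n : ℕ} [NeZero n] (x : Fin n → ZMod 12) : Fin n → ZMod 12 :=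
  fun r => x (r + 1)

open Fin.NatCast in
lemma cshift_iter {n : ℕ} [NeZero n] (k : ℕ) (x : Fin n → ZMod 12) :
    (cshift (n := n))^[k] x = fun r => x (r + (k : Fin n)) := by
  induction k generalizing x with
  | zero => simp
  | succ k ih =>
    rw [Function.iterate_succ_apply, ih]
    funext r
    simp [cshift, add_assoc, Nat.cast_add]

open Fin.NatCast in
theorem stmt1 (n : ℕ) [NeZero n] (hn : 2 ≤ n) (k : ℕ) :
    (cshift (n := n))^[k] ∘ p (k : Fin n) ((k + 1 : ℕ) : Fin n) =
      p 0 1 ∘ (cshift (n := n))^[k] := by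
  funext x
  simp only [Function.comp_apply, cshift_iter]
  funext r
  simp [p, Nat.cast_add, Nat.cast_one, zero_add, add_comm]
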